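/- Under the hypotheses of the preceding lemma applied to a single element: if A is a local Noetherian ring with exactly one associated prime 𝔯, B a local Noetherian A-algebra, b ∈ B a non-zero-divisor non-unit such that B/(b) is A-flat and (𝔯B, b) is prime, then the ideal (b) is (𝔯B, b)-primary in B. -/

import Mathlib

universe u v

section Aux

variable {R : Type u} {M : Type v} [CommRing R] [AddCommGroup M] [Module R M]

/-- Every element of a tensor product is a finite sum of pure tensors. -/
lemma aux_tensor_rep {N : Type*} [AddCommGroup N] [Module R N] (w : TensorProduct R M N) :
    ∃ (q : ℕ) (y : Fin q → M) (c : Fin q → N), w = ∑ j, y j ⊗ₜ[R] c j := by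
  induction w with
  | zero => exact ⟨0, ![], ![], by simp⟩
  | tmul m n => exact ⟨1, ![m], ![n], by simp⟩
  | add w₁ w₂ h₁ h₂ =>
      obtain ⟨q₁, y₁, c₁, rfl⟩ := h₁
      obtain ⟨q₂, y₂, c₂, rfl⟩ := h₂
      refine ⟨q₁ + q₂, Fin.append y₁ y₂, Fin.append c₁ c₂, ?_⟩
      rw [Fin.sum_univ_add]
      simp [Fin.append_left, Fin.append_right]

/-- Equational criterion for flatness (universe-polymorphic version), forward direction. -/
lemma aux_flat_relation [Module.Flat R M] {p : ℕ} (f : Fin p → R) (x : Fin p → M)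
    (h : ∑ t, f t • x t = 0) :
    ∃ (q : ℕ) (a : Fin p → Fin q → R) (y : Fin q → M),
      (∀ t, x t = ∑ j, a t j • y j) ∧ ∀ j, ∑ t, f t * a t j = 0 := by
  classical
  set g : (Fin p → R) →ₗ[R] R := Fintype.linearCombination R f with hg
  have hgapp : ∀ c : Fin p → R, g c = ∑ t, c t * f t := by
    intro c; simp [hg, Fintype.linearCombination_apply]
  have hexact : Function.Exact ((LinearMap.ker g).subtype.lTensor M) (g.lTensor M) :=
    Module.Flat.lTensor_exact M (LinearMap.exact_subtype_ker_map g)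
  set xt : TensorProduct R M (Fin p → R) := ∑ t, x t ⊗ₜ[R] Pi.single t (1 : R) with hxt
  have hx0 : (g.lTensor M) xt = 0 := by
    apply (TensorProduct.rid R M).injective
    rw [hxt, map_sum, map_sum, map_zero]
    have : ∀ t, (TensorProduct.rid R M) ((g.lTensor M) (x t ⊗ₜ[R] Pi.single t (1 : R)))
        = f t • x t := by
      intro t
      rw [LinearMap.lTensor_tmul, TensorProduct.rid_tmul, hgapp]
      rw [Finset.sum_eq_single t (by intro s _ hs; simp [Pi.single_apply, hs]) (by simp)]
      simp
    rw [Finset.sum_congr rfl fun t _ => this t, h]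
  obtain ⟨w, hw⟩ := (hexact xt).mp hx0
  obtain ⟨q, y, c, rfl⟩ := aux_tensor_rep w
  refine ⟨q, fun t j => (c j : Fin p → R) t, y, ?_, ?_⟩
  · intro t
    have := congrArg (fun w => (TensorProduct.rid R M)
      (((LinearMap.proj t : (Fin p → R) →ₗ[R] R).lTensor M) w)) hw
    simp only [map_sum, LinearMap.lTensor_tmul,
      LinearMap.coe_proj, Function.eval, TensorProduct.rid_tmul, LinearMap.coe_restrictScalars,
      Submodule.coe_subtype, hxt] at this
    rw [Finset.sum_eq_single t (by intro s _ hs; simp [Pi.single_apply, hs]) (by simp)] at this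
    simpa using this.symm
  · intro j
    have hcj : g (c j : Fin p → R) = 0 := (c j).2
    rw [hgapp] at hcj
    rw [← hcj]
    exact Finset.sum_congr rfl fun t _ => mul_comm _ _

/-- Scalars that are non-zero-divisors on `R` act injectively on flat modules. -/
lemma aux_flat_smul [Module.Flat R M] {s : R} (hs : ∀ c : R, s * c = 0 → c = 0)
    {z : M} (hz : s • z = 0) : z = 0 := by
  have h : ∑ t : Fin 1, (fun _ => s) t • (fun _ => z) t = 0 := by simpa using hz
  obtain ⟨q, a, y, h1, h2⟩ := aux_flat_relation _ _ h
  have hz' := h1 0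
  have : ∀ j, a 0 j = 0 := by
    intro j
    apply hs
    simpa using h2 j
  simp only [this, zero_smul, Finset.sum_const_zero] at hz'
  exact hz'

/-- If every element of a finite family `r` kills `z`, then `z` is a combination
`∑ k t • m t` where each `k t` kills every `r i`. -/
lemma aux_flat_socle [Module.Flat R M] {n : ℕ} (r : Fin n → R) (z : M)
    (hz : ∀ i, r i • z = 0) :
    ∃ (p : ℕ) (k : Fin p → R) (m : Fin p → M),
      (∀ t i, r i * k t = 0) ∧ z = ∑ t, k t • m t := by
  induction n with
  | zero => exact ⟨1, fun _ => 1, fun _ => z, by intro t i; exact absurd i.2 (by simp), by simp⟩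
  | succ n ih =>
    obtain ⟨p, k, m, hk, hzeq⟩ := ih (fun i => r i.castSucc) (fun i => hz i.castSucc)
    have hrel : ∑ t, (r (Fin.last n) * k t) • m t = 0 := by
      rw [← hz (Fin.last n), hzeq, Finset.smul_sum]
      exact Finset.sum_congr rfl fun t _ => by rw [smul_smul]
    obtain ⟨q, a, y, hxy, hsum⟩ := aux_flat_relation _ _ hrel
    refine ⟨q, fun j => ∑ t, k t * a t j, y, ?_, ?_⟩
    · intro j i
      refine Fin.lastCases ?_ ?_ i
      · rw [Finset.mul_sum, ← hsum j]
        exact Finset.sum_congr rfl fun t _ => by ring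
      · intro i'
        rw [Finset.mul_sum]
        apply Finset.sum_eq_zero
        intro t _
        rw [← mul_assoc, hk t i', zero_mul]
    · rw [hzeq]
      rw [Finset.sum_congr rfl fun t (_ : t ∈ Finset.univ) =>
        congrArg (k t • ·) (hxy t)]
      simp only [Finset.smul_sum, smul_smul]
      rw [Finset.sum_comm]
      exact Finset.sum_congr rfl fun j _ => by rw [Finset.sum_smul]

end Aux

set_option maxHeartbeats 2000000 in
/-- If `A` is a local Noetherian ring with exactly one associated prime `𝔯`, `B` a local
Noetherian `A`-algebra, and `b ∈ B` a non-zero-divisor non-unit such that `B/(b)` is `A`-flat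
and `(𝔯B, b)` is prime, then `(b)` is `(𝔯B, b)`-primary, i.e. the set of associated primes of
`B/(b)` is exactly `{(𝔯B, b)}`. -/
theorem stmt1 {A B : Type*} [CommRing A] [CommRing B]
    [IsNoetherianRing A] [IsNoetherianRing B] [IsLocalRing A] [IsLocalRing B]
    [Algebra A B] (b : B)
    (hnzd : b ∈ nonZeroDivisors B) (hnu : ¬ IsUnit b)
    (𝔯 : Ideal A) (hA : associatedPrimes A A = {𝔯})
    (hflat : Module.Flat A (B ⧸ Ideal.span {b}))
    (hprime : (𝔯.map (algebraMap A B) ⊔ Ideal.span {b}).IsPrime) :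
    associatedPrimes B (B ⧸ Ideal.span {b}) = {𝔯.map (algebraMap A B) ⊔ Ideal.span {b}} := by
  classical
  haveI := hflat
  set h : A →+* B := algebraMap A B with hh
  set 𝔭 : Ideal B := 𝔯.map (algebraMap A B) ⊔ Ideal.span {b} with h𝔭
  set π : B →+* B ⧸ Ideal.span {b} := Ideal.Quotient.mk (Ideal.span {b}) with hπ
  -- basic facts about 𝔯
  have h𝔯mem : 𝔯 ∈ associatedPrimes A A := by rw [hA]; rfl
  have h𝔯prime : 𝔯.IsPrime := h𝔯mem.isPrime
  -- zero divisors of A are exactly 𝔯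
  have hzd : ∀ a : A, (∃ x : A, x ≠ 0 ∧ a • x = 0) ↔ a ∈ 𝔯 := by
    have := biUnion_associatedPrimes_eq_zero_divisors A A
    rw [hA] at this
    simp only [Set.mem_singleton_iff, Set.iUnion_iUnion_eq_left] at this
    intro a
    constructor
    · intro hx
      have : a ∈ (𝔯 : Set A) := this ▸ hx
      exact this
    · intro ha
      have : a ∈ {r : A | ∃ x : A, x ≠ 0 ∧ r • x = 0} := this ▸ ha
      exact this
  have hreg : ∀ s : A, s ∉ 𝔯 → ∀ c : A, s * c = 0 → c = 0 := by
    intro s hs c hc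
    by_contra hc0
    exact hs ((hzd s).mp ⟨c, hc0, by rw [smul_eq_mul]; exact hc⟩)
  -- 𝔯 is contained in the nilradical
  have hnil : ∀ a ∈ 𝔯, IsNilpotent a := by
    intro a ha
    by_contra hna
    have hpow : ∀ n : ℕ, a ^ n ≠ 0 := by
      intro n hn
      exact hna ⟨n, hn⟩
    have hmono : Monotone (fun n => LinearMap.ker (LinearMap.toSpanSingleton A A (a ^ n))) := by
      intro n m hnm
      intro c hc
      simp only [LinearMap.mem_ker, LinearMap.toSpanSingleton_apply] at hc ⊢
      obtain ⟨d, rfl⟩ := Nat.exists_eq_add_of_le hnm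
      rw [smul_eq_mul] at hc ⊢
      rw [pow_add, ← mul_assoc, hc, zero_mul]
    obtain ⟨n₀, hn₀⟩ := monotone_stabilizes_iff_noetherian.mpr
      (inferInstance : IsNoetherian A A) ⟨_, hmono⟩
    set x : A := a ^ n₀ with hx
    have hxne : x ≠ 0 := hpow n₀
    set X : Submodule A A := Submodule.span A {x} with hX
    haveI : Nontrivial X :=
      ⟨⟨x, Submodule.mem_span_singleton_self x⟩, 0, by simp [hxne]⟩
    obtain ⟨P, hP⟩ := associatedPrimes.nonempty A X
    have hPA : P ∈ associatedPrimes A A :=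
      associatedPrimes.subset_of_injective (f := X.subtype) (Submodule.injective_subtype X) hP
    rw [hA, Set.mem_singleton_iff] at hPA
    obtain ⟨hPp, v, hv⟩ := isAssociatedPrime_iff.mp hP
    have hav : a • v = 0 := by
      have : a ∈ (Submodule.span A {v}).annihilator := by
        rw [Submodule.mem_annihilator_span_singleton]
        rw [← hPA, hv, Submodule.mem_colon_singleton, Submodule.mem_bot] at ha; exact ha
      exact (Submodule.mem_annihilator_span_singleton v a).mp this
    obtain ⟨c, hc⟩ := Submodule.mem_span_singleton.mp v.2
    have hvz : (v : A) = 0 := by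
      have h1 : a * (v : A) = 0 := by
        have := congrArg (Subtype.val) hav
        simpa [smul_eq_mul] using this
      rw [← hc, smul_eq_mul, hx] at h1
      have hcmem : c ∈ LinearMap.ker (LinearMap.toSpanSingleton A A (a ^ (n₀ + 1))) := by
        simp only [LinearMap.mem_ker, LinearMap.toSpanSingleton_apply, smul_eq_mul]
        rw [pow_succ]
        calc c * (a ^ n₀ * a) = a * (c * a ^ n₀) := by ring
        _ = 0 := h1
      have hstab : LinearMap.ker (LinearMap.toSpanSingleton A A (a ^ n₀))
          = LinearMap.ker (LinearMap.toSpanSingleton A A (a ^ (n₀ + 1))) :=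
        hn₀ (n₀ + 1) (Nat.le_succ n₀)
      rw [← hstab] at hcmem
      simp only [LinearMap.mem_ker, LinearMap.toSpanSingleton_apply, smul_eq_mul] at hcmem
      rw [← hc, smul_eq_mul, hx, hcmem]
    have : P = ⊤ := by
      rw [hv, show v = 0 from Subtype.ext hvz]
      ext; simp [Submodule.mem_colon_singleton]
    exact hPp.ne_top this
  -- 𝔯 is nilpotent
  obtain ⟨K, hK⟩ : ∃ k : ℕ, 𝔯 ^ k = ⊥ := by
    have h1 : 𝔯 ≤ nilradical A := fun a ha => mem_nilradical.mpr (hnil a ha)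
    obtain ⟨k, hk⟩ := IsNoetherianRing.isNilpotent_nilradical A
    refine ⟨k, le_bot_iff.mp ?_⟩
    have h2 := Ideal.pow_right_mono h1 k
    rwa [hk, Ideal.zero_eq_bot] at h2
  -- radical of (b) is 𝔭
  have hrad : (Ideal.span {b}).radical = 𝔭 := by
    apply le_antisymm
    · exact hprime.radical_le_iff.mpr le_sup_right
    · apply sup_le
      · rw [Ideal.map_le_iff_le_comap]
        intro a ha
        obtain ⟨n, hn⟩ := hnil a ha
        refine Ideal.mem_comap.mpr ⟨n, ?_⟩
        rw [← map_pow, hn, map_zero]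
        exact Submodule.zero_mem _
      · exact Ideal.le_radical
  have hbne : Ideal.span {b} ≠ ⊤ := by
    intro hbt
    exact hnu (Ideal.span_singleton_eq_top.mp hbt)
  -- helper: smul by B on quotient
  have hsmul : ∀ d w : B, d • (π w) = π (d * w) := by
    intro d w; rfl
  have hasmul : ∀ (a : A) (w : B), a • (π w) = π (h a * w) := by
    intro a w
    rw [← algebraMap_smul B a (π w)]
    exact hsmul _ w
  -- commuting A- and B- scalar actions on the quotient
  have hcomm : ∀ (a : A) (d : B) (v : B ⧸ Ideal.span {b}), a • (d • v) = d • (a • v) := by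
    intro a d v
    rw [← algebraMap_smul B a v, ← algebraMap_smul B a (d • v), smul_smul, smul_smul, mul_comm]
  -- the submodule 𝔯 • M and its interaction with 𝔭
  set 𝔯T : Submodule A (B ⧸ Ideal.span {b}) := 𝔯 • (⊤ : Submodule A (B ⧸ Ideal.span {b}))
    with h𝔯T
  have hBstable : ∀ (d : B) (v : B ⧸ Ideal.span {b}), v ∈ 𝔯T → d • v ∈ 𝔯T := by
    intro d v hv
    refine Submodule.smul_induction_on (p := fun v => d • v ∈ 𝔯T) hv ?_ ?_
    · intro r hr n _
      rw [← hcomm r d n]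
      exact Submodule.smul_mem_smul hr trivial
    · intro v₁ v₂ h1 h2
      rw [smul_add]; exact Submodule.add_mem _ h1 h2
  have P1 : ∀ w ∈ 𝔭, π w ∈ 𝔯T := by
    let Q : Ideal B :=
      { carrier := {w : B | π w ∈ 𝔯T}
        add_mem' := fun h1 h2 => by
          simp only [Set.mem_setOf_eq, map_add] at *
          exact Submodule.add_mem _ h1 h2
        zero_mem' := by
          simp only [Set.mem_setOf_eq, map_zero]
          exact Submodule.zero_mem _
        smul_mem' := fun d w hw => by
          simp only [Set.mem_setOf_eq, smul_eq_mul] at *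
          rw [← hsmul]
          exact hBstable d _ hw }
    have hQ : 𝔭 ≤ Q := by
      rw [h𝔭]
      apply sup_le
      · rw [Ideal.map_le_iff_le_comap]
        intro a ha
        show π (h a) ∈ 𝔯T
        have : π (h a) = a • π 1 := by rw [hasmul, mul_one]
        rw [this]
        exact Submodule.smul_mem_smul ha trivial
      · intro w hw
        show π w ∈ 𝔯T
        rw [Ideal.Quotient.eq_zero_iff_mem.mpr hw]
        exact Submodule.zero_mem _
    exact fun w hw => hQ hw
  have P2 : ∀ w : B, π w ∈ 𝔯T → w ∈ 𝔭 := by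
    have key : ∀ v ∈ 𝔯T, ∀ w : B, π w = v → w ∈ 𝔭 := by
      intro v hv
      refine Submodule.smul_induction_on (p := fun v => ∀ w : B, π w = v → w ∈ 𝔭) hv ?_ ?_
      · intro r hr n _ w hw
        obtain ⟨u, rfl⟩ := Ideal.Quotient.mk_surjective n
        rw [hasmul] at hw
        have hmem : w - h r * u ∈ Ideal.span {b} := by
          rw [← Ideal.Quotient.eq] at *
          exact hw
        have hw' : w = (w - h r * u) + h r * u := by ring
        rw [hw']
        refine Submodule.add_mem _ (le_sup_right (a := Ideal.map h 𝔯) hmem) ?_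
        exact le_sup_left (b := Ideal.span {b})
          (Ideal.mul_mem_right u _ (Ideal.mem_map_of_mem h hr))
      · intro v₁ v₂ ih1 ih2 w hw
        obtain ⟨w₁, hw₁⟩ := Ideal.Quotient.mk_surjective v₁
        have h2 : π (w - w₁) = v₂ := by
          rw [map_sub, hw₁, hw]; ring
        have hw' : w = w₁ + (w - w₁) := by ring
        rw [hw']
        exact Submodule.add_mem _ (ih1 w₁ hw₁) (ih2 (w - w₁) h2)
    exact fun w hw => key _ hw w rfl
  -- the main primary property
  have main : ∀ {x y : B}, x * y ∈ Ideal.span {b} →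
      x ∈ Ideal.span {b} ∨ y ∈ (Ideal.span {b}).radical := by
    intro x y hxy
    by_cases hy : y ∈ 𝔭
    · right; rw [hrad]; exact hy
    left
    -- the key induction
    have ZC : ∀ (p : ℕ) (k : Fin p → A), (∀ t, ∀ ρ ∈ 𝔯, ρ * k t = 0) →
        ∀ m : Fin p → B ⧸ Ideal.span {b},
          y • (∑ t, k t • m t) = 0 → (∑ t, k t • m t) = 0 := by
      intro p
      induction p with
      | zero => intro k _ m _; simp
      | succ p ih =>
        intro k hk m hym
        by_cases hdep : ∀ c : Fin (p + 1) → A, (∑ t, c t * k t = 0) → ∀ t, c t ∈ 𝔯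
        · -- independent case
          have hrel : ∑ t, k t • (y • m t) = 0 := by
            calc ∑ t, k t • (y • m t) = y • ∑ t, k t • m t := by
                  rw [Finset.smul_sum]
                  exact Finset.sum_congr rfl fun t _ => hcomm (k t) y (m t)
            _ = 0 := hym
          obtain ⟨q, a, v, hm, hs⟩ := aux_flat_relation k (fun t => y • m t) hrel
          have hmem : ∀ t, m t ∈ 𝔯T := by
            intro t
            obtain ⟨xt, hxt⟩ := Ideal.Quotient.mk_surjective (m t)
            have h1 : π (y * xt) ∈ 𝔯T := by
              rw [← hsmul, hxt, hm t]
              refine Submodule.sum_mem _ fun j _ => ?_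
              refine Submodule.smul_mem_smul ?_ trivial
              refine hdep (fun t => a t j) ?_ t
              rw [← hs j]
              exact Finset.sum_congr rfl fun t _ => mul_comm _ _
            have h3 : xt ∈ 𝔭 := (hprime.mem_or_mem (P2 _ h1)).resolve_left hy
            rw [← hxt]; exact P1 xt h3
          refine Finset.sum_eq_zero fun t _ => ?_
          refine Submodule.smul_induction_on (p := fun v => k t • v = 0) (hmem t) ?_ ?_
          · intro ρ hρ n _
            rw [smul_smul, mul_comm, hk t ρ hρ, zero_smul]
          · intro v₁ v₂ h1 h2
            rw [smul_add, h1, h2, add_zero]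
        · -- dependent case
          push_neg at hdep
          obtain ⟨c, hc0, t₀, hct₀⟩ := hdep
          have hsplit := Fin.sum_univ_succAbove (fun t => k t • m t) t₀
          have hcrel := Fin.sum_univ_succAbove (fun t => c t * k t) t₀
          rw [hc0] at hcrel
          have hcsum : ∑ i : Fin p, c (t₀.succAbove i) * k (t₀.succAbove i)
              = -(c t₀ * k t₀) := eq_neg_of_add_eq_zero_right hcrel.symm
          have key : c t₀ • (∑ t, k t • m t) = ∑ i : Fin p, k (t₀.succAbove i) •
              (c t₀ • m (t₀.succAbove i) - c (t₀.succAbove i) • m t₀) := by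
            have e1 : ∀ i : Fin p, k (t₀.succAbove i) •
                (c t₀ • m (t₀.succAbove i) - c (t₀.succAbove i) • m t₀)
                = c t₀ • (k (t₀.succAbove i) • m (t₀.succAbove i))
                  - (c (t₀.succAbove i) * k (t₀.succAbove i)) • m t₀ := by
              intro i
              simp only [smul_sub, smul_smul]
              rw [mul_comm (k (t₀.succAbove i)) (c t₀),
                mul_comm (k (t₀.succAbove i)) (c (t₀.succAbove i))]
            rw [Finset.sum_congr rfl fun i _ => e1 i, Finset.sum_sub_distrib,
              ← Finset.sum_smul, hcsum, ← Finset.smul_sum, neg_smul, sub_neg_eq_add,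
              hsplit, smul_add, smul_smul]
            abel
          have hterm : ∀ i : Fin p, ∀ ρ ∈ 𝔯, ρ * k (t₀.succAbove i) = 0 :=
            fun i ρ hρ => hk (t₀.succAbove i) ρ hρ
          have hz' := ih (fun i => k (t₀.succAbove i)) hterm
            (fun i => c t₀ • m (t₀.succAbove i) - c (t₀.succAbove i) • m t₀) ?_
          · have hS0 : c t₀ • (∑ t, k t • m t) = 0 := by rw [key, hz']
            exact aux_flat_smul (hreg _ hct₀) hS0
          · rw [← key, ← hcomm (c t₀) y (∑ t, k t • m t), hym, smul_zero]
    -- socle claim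
    have socle : ∀ w : B ⧸ Ideal.span {b}, (∀ r ∈ 𝔯, r • w = 0) → y • w = 0 → w = 0 := by
      intro w hrw hyw
      obtain ⟨n, r, hr⟩ := Submodule.fg_iff_exists_fin_generating_family.mp
        (IsNoetherian.noetherian 𝔯)
      obtain ⟨p, k, m, hk, hweq⟩ := aux_flat_socle r w
        (fun i => hrw (r i) (hr ▸ Submodule.subset_span (Set.mem_range_self i)))
      have hk𝔯 : ∀ t, ∀ ρ ∈ 𝔯, ρ * k t = 0 := by
        intro t ρ hρ
        rw [← hr] at hρ
        refine Submodule.span_induction ?_ ?_ ?_ ?_ hρ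
        · rintro _ ⟨i, rfl⟩; exact hk t i
        · rw [zero_mul]
        · intro c1 c2 _ _ h1 h2; rw [add_mul, h1, h2, add_zero]
        · intro d c _ hc; rw [smul_eq_mul, mul_assoc, hc, mul_zero]
      rw [hweq]
      exact ZC p k hk𝔯 m (by rw [← hweq]; exact hyw)
    -- downward induction on powers of 𝔯
    have C : ∀ j : ℕ, ∀ w : B ⧸ Ideal.span {b},
        y • w = 0 → (∀ a ∈ 𝔯 ^ j, a • w = 0) → w = 0 := by
      intro j
      induction j with
      | zero =>
        intro w _ hkill
        have := hkill 1 (by rw [pow_zero, Ideal.one_eq_top]; trivial)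
        rwa [one_smul] at this
      | succ j ihj =>
        intro w hyw hkill
        refine ihj w hyw fun a ha => socle (a • w) ?_ ?_
        · intro ρ hρ
          rw [smul_smul]
          exact hkill _ (by rw [pow_succ, mul_comm ρ a]; exact Ideal.mul_mem_mul ha hρ)
        · rw [← hcomm a y w, hyw, smul_zero]
    have hgoal : π x = 0 := by
      refine C K (π x) ?_ ?_
      · rw [hsmul, mul_comm]
        exact Ideal.Quotient.eq_zero_iff_mem.mpr hxy
      · intro a ha
        rw [hK, Ideal.mem_bot] at ha
        rw [ha, zero_smul]
    exact Ideal.Quotient.eq_zero_iff_mem.mp hgoal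
  rw [associatedPrimes.eq_singleton_of_isPrimary (Ideal.isPrimary_iff.mpr ⟨hbne, main⟩), hrad]
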